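/- The Gaussian mechanism with noise variance τ and L2-sensitivity Δ satisfies (Δ²/(2τ))-zCDP; that is, for all adjacent databases D, D' and all α ∈ (1, ∞), the Rényi divergence of order α between N(f(D), τ·I) and N(f(D'), τ·I) is at most α · Δ²/(2τ). -/

import Mathlib

open MeasureTheory ProbabilityTheory Real

/-- 1-D key computation: `p(x) * (p(x)/q(x))^(α-1)` is a constant times a shifted
Gaussian PDF. -/
lemma gaussian_pointwise (μ μ' : ℝ) (τ : NNReal) (hτ : 0 < (τ : ℝ)) (α : ℝ) (x : ℝ) :
    gaussianPDFReal μ τ x *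
      (gaussianPDFReal μ τ x / gaussianPDFReal μ' τ x) ^ (α - 1)
    = Real.exp (α * (α - 1) * (μ - μ') ^ 2 / (2 * τ)) *
      gaussianPDFReal (μ + (α - 1) * (μ - μ')) τ x := by
  have hτ0 : (τ : ℝ) ≠ 0 := ne_of_gt hτ
  simp only [gaussianPDFReal]
  have hc : 0 < (Real.sqrt (2 * π * τ))⁻¹ := by
    rw [inv_pos]
    exact Real.sqrt_pos.mpr (by positivity)
  have hA : -(x - μ) ^ 2 / (2 * (τ : ℝ)) +
      (-(x - μ) ^ 2 / (2 * (τ : ℝ)) - -(x - μ') ^ 2 / (2 * (τ : ℝ))) * (α - 1)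
      = α * (α - 1) * (μ - μ') ^ 2 / (2 * (τ : ℝ)) +
        -(x - (μ + (α - 1) * (μ - μ'))) ^ 2 / (2 * (τ : ℝ)) := by
    field_simp
    ring
  rw [mul_div_mul_left _ _ (ne_of_gt hc), ← Real.exp_sub, ← Real.exp_mul, mul_assoc,
    ← Real.exp_add, hA, Real.exp_add]
  ring

lemma one_dim_integral (μ μ' : ℝ) (τ : NNReal) (hτ : 0 < (τ : ℝ)) (α : ℝ) :
    ∫ x : ℝ, gaussianPDFReal μ τ x *
      (gaussianPDFReal μ τ x / gaussianPDFReal μ' τ x) ^ (α - 1)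
    = Real.exp (α * (α - 1) * (μ - μ') ^ 2 / (2 * τ)) := by
  simp_rw [gaussian_pointwise μ μ' τ hτ α]
  rw [integral_const_mul, integral_gaussianPDFReal_eq_one _ (by exact_mod_cast hτ.ne'), mul_one]

/-- The Gaussian mechanism with noise variance `τ` and L2-sensitivity `Δ`
satisfies `(Δ²/(2τ))`-zCDP: for all adjacent databases `d, d'` and all
`α ∈ (1, ∞)`, the Rényi divergence of order `α` between `N(f(d), τ I)` and
`N(f(d'), τ I)` is at most `α Δ²/(2τ)`. -/
theorem gaussian_mechanism_zCDP {D : Type*} (adj : D → D → Prop) (n : ℕ)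
    (f : D → Fin n → ℝ) (Δ : ℝ) (τ : NNReal) (hτ : 0 < (τ : ℝ))
    (hsens : ∀ d d', adj d d' → Real.sqrt (∑ i, (f d i - f d' i) ^ 2) ≤ Δ)
    (d d' : D) (hadj : adj d d') (α : ℝ) (hα : 1 < α) :
    (α - 1)⁻¹ * Real.log (∫ x : Fin n → ℝ,
        (∏ i, gaussianPDFReal (f d i) τ (x i)) *
          ((∏ i, gaussianPDFReal (f d i) τ (x i)) /
            (∏ i, gaussianPDFReal (f d' i) τ (x i))) ^ (α - 1))
      ≤ α * Δ ^ 2 / (2 * τ) := by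
  have hτne : τ ≠ 0 := by exact_mod_cast hτ.ne'
  have hpos : ∀ (m : ℝ) (y : ℝ), 0 < gaussianPDFReal m τ y :=
    fun m y => gaussianPDFReal_pos m τ y hτne
  -- rewrite the integrand as a product over coordinates
  have hint : ∫ x : Fin n → ℝ,
        (∏ i, gaussianPDFReal (f d i) τ (x i)) *
          ((∏ i, gaussianPDFReal (f d i) τ (x i)) /
            (∏ i, gaussianPDFReal (f d' i) τ (x i))) ^ (α - 1)
      = Real.exp (∑ i, α * (α - 1) * (f d i - f d' i) ^ 2 / (2 * τ)) := by
    have heq : ∀ x : Fin n → ℝ,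
        (∏ i, gaussianPDFReal (f d i) τ (x i)) *
          ((∏ i, gaussianPDFReal (f d i) τ (x i)) /
            (∏ i, gaussianPDFReal (f d' i) τ (x i))) ^ (α - 1)
        = ∏ i, (gaussianPDFReal (f d i) τ (x i) *
            (gaussianPDFReal (f d i) τ (x i) / gaussianPDFReal (f d' i) τ (x i)) ^ (α - 1)) := by
      intro x
      rw [← Finset.prod_div_distrib,
        ← Real.finset_prod_rpow _ _ (fun i _ => le_of_lt (div_pos (hpos _ _) (hpos _ _))),
        Finset.prod_mul_distrib]
    simp_rw [heq]
    rw [MeasureTheory.integral_fintype_prod_volume_eq_prod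
      (fun i (y : ℝ) => gaussianPDFReal (f d i) τ y *
        (gaussianPDFReal (f d i) τ y / gaussianPDFReal (f d' i) τ y) ^ (α - 1))]
    refine (Finset.prod_congr rfl fun i _ => one_dim_integral _ _ τ hτ α).trans ?_
    exact (Real.exp_sum _ _).symm
  rw [hint, Real.log_exp]
  have hα1 : 0 < α - 1 := by linarith
  have hS : ∑ i, (f d i - f d' i) ^ 2 ≤ Δ ^ 2 := by
    have hS0 : 0 ≤ ∑ i, (f d i - f d' i) ^ 2 :=
      Finset.sum_nonneg fun i _ => sq_nonneg _
    have h := hsens d d' hadj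
    calc ∑ i, (f d i - f d' i) ^ 2
        = Real.sqrt (∑ i, (f d i - f d' i) ^ 2) ^ 2 := (Real.sq_sqrt hS0).symm
      _ ≤ Δ ^ 2 := pow_le_pow_left₀ (Real.sqrt_nonneg _) h 2
  rw [← Finset.sum_div, ← Finset.mul_sum]
  rw [show (α - 1)⁻¹ * (α * (α - 1) * (∑ i, (f d i - f d' i) ^ 2) / (2 * τ))
      = α * (∑ i, (f d i - f d' i) ^ 2) / (2 * τ) by
    field_simp]
  gcongr
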